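/- For any δ > 0 and any two configurations C₁, C₂ of k servers on the discretized unit line, the i-th smallest distance-to-nearest-server under C₁ is at most 2k times the i-th smallest distance-to-nearest-server under C₂, for every index i. -/

import Mathlib

/-- Distance (in units of `δ`) from grid point `p` to the nearest server in `C`. -/
noncomputable def Dmin (δ : ℝ) (C : Finset ℤ) (p : ℤ) : ℝ :=
  δ * sInf ((fun s : ℤ => |(p : ℝ) - (s : ℝ)|) '' (C : Set ℤ))

/-- The `i`-th smallest (0-indexed) distance-to-nearest-server over all grid
points `0, 1, …, N` (each at spacing `δ`), for server configuration `C`. -/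
noncomputable def nthDist (δ : ℝ) (N : ℤ) (C : Finset ℤ) (i : ℕ) : ℝ :=
  (((Finset.Icc (0 : ℤ) N).val.map (Dmin δ C)).sort (· ≤ ·)).getD i 0

/- ### Auxiliary lemmas -/

lemma dmin_le {δ : ℝ} (hδ : 0 ≤ δ) {C : Finset ℤ} {s : ℤ} (hs : s ∈ C) (p : ℤ) :
    Dmin δ C p ≤ δ * |(p : ℝ) - s| := by
  unfold Dmin
  refine mul_le_mul_of_nonneg_left ?_ hδ
  refine csInf_le ⟨0, ?_⟩ ⟨s, hs, rfl⟩
  rintro x ⟨t, -, rfl⟩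
  exact abs_nonneg _

lemma dmin_eq {δ : ℝ} {C : Finset ℤ} (hC : C.Nonempty) (p : ℤ) :
    ∃ s ∈ C, Dmin δ C p = δ * |(p : ℝ) - s| := by
  have hfin : ((fun s : ℤ => |(p : ℝ) - s|) '' (C : Set ℤ)).Finite :=
    (C.finite_toSet.image _)
  have hne : ((fun s : ℤ => |(p : ℝ) - s|) '' (C : Set ℤ)).Nonempty :=
    ⟨_, Set.mem_image_of_mem _ hC.choose_spec⟩
  obtain ⟨s, hs, h⟩ := hne.csInf_mem hfin
  exact ⟨s, hs, by rw [Dmin, ← h]⟩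

/-- In a sorted list, if at least `i+1` elements are `≤ t`, then the `i`-th element is `≤ t`. -/
lemma sorted_getD_le_of_countP {l : List ℝ} (hl : l.Pairwise (· ≤ ·)) {i : ℕ}
    (hi : i < l.length) {t : ℝ}
    (h : i + 1 ≤ l.countP (fun x => decide (x ≤ t))) : l.getD i 0 ≤ t := by
  rw [List.getD_eq_getElem l 0 hi]
  by_contra ht
  push_neg at ht
  have hsplit : l.countP (fun x => decide (x ≤ t)) =
      (l.take i).countP (fun x => decide (x ≤ t)) +
      (l.drop i).countP (fun x => decide (x ≤ t)) := by
    conv_lhs => rw [← List.take_append_drop i l]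
    exact List.countP_append
  have h1 : (l.take i).countP (fun x => decide (x ≤ t)) ≤ i := by
    calc (l.take i).countP (fun x => decide (x ≤ t)) ≤ (l.take i).length :=
          List.countP_le_length
      _ ≤ i := by simp
  have hdropsorted : (l.drop i).Pairwise (· ≤ ·) := hl.sublist (List.drop_sublist i l)
  have hmem : ∀ x ∈ l.drop i, l[i] ≤ x := by
    rw [List.drop_eq_getElem_cons hi] at hdropsorted ⊢
    intro x hx
    rcases List.mem_cons.mp hx with rfl | hx
    · exact le_refl _
    · exact (List.pairwise_cons.mp hdropsorted).1 x hx
  have h2 : (l.drop i).countP (fun x => decide (x ≤ t)) = 0 := by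
    refine List.countP_eq_zero.mpr ?_
    intro x hx
    simpa using not_le.mpr (lt_of_lt_of_le ht (hmem x hx))
  omega

/-- In a sorted list, at least `i+1` elements are `≤` the `i`-th element. -/
lemma le_countP_getD {l : List ℝ} (hl : l.Pairwise (· ≤ ·)) {i : ℕ} (hi : i < l.length) :
    i + 1 ≤ l.countP (fun x => decide (x ≤ l.getD i 0)) := by
  rw [List.getD_eq_getElem l 0 hi]
  have hsub : (l.take (i + 1)).Sublist l := List.take_sublist _ _
  have hlen : (l.take (i + 1)).length = i + 1 := by simp; omega
  have hall' : (l.take (i + 1)).countP (fun x => decide (x ≤ l[i])) =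
      (l.take (i + 1)).length := by
    refine List.countP_eq_length.mpr ?_
    intro a ha
    obtain ⟨j, hj, rfl⟩ := List.mem_iff_getElem.mp ha
    rw [List.getElem_take]
    have hj' : j < l.length := by rw [hlen] at hj; omega
    have : l[j] ≤ l[i] := by
      rcases Nat.lt_or_ge j i with hji | hji
      · exact List.pairwise_iff_getElem.mp hl j i hj' hi hji
      · have : j = i := by rw [hlen] at hj; omega
        subst this; exact le_refl _
    simpa using this
  have hall : (l.take (i + 1)).countP (fun x => decide (x ≤ l[i])) = i + 1 := by
    rw [hall', hlen]
  calc i + 1 = (l.take (i + 1)).countP (fun x => decide (x ≤ l[i])) := hall.symm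
    _ ≤ l.countP (fun x => decide (x ≤ l[i])) := hsub.countP_le

lemma Icc_inter_Icc_int (a b c d : ℤ) :
    Finset.Icc a b ∩ Finset.Icc c d = Finset.Icc (max a c) (min b d) := by
  ext x
  simp only [Finset.mem_inter, Finset.mem_Icc]
  omega

/-- For any `δ > 0` and any two configurations `C₁`, `C₂` of `k` servers on the
discretized line, the `i`-th smallest distance-to-nearest-server under `C₁`
is at most `2k` times the `i`-th smallest under `C₂`. -/
theorem sorted_distances_ratio_le_two_k
    (δ : ℝ) (hδ : 0 < δ) (k : ℕ) (hk : 0 < k) (N : ℤ)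
    (C₁ C₂ : Finset ℤ)
    (hC₁card : C₁.card = k) (hC₂card : C₂.card = k)
    (hC₁sub : C₁ ⊆ Finset.Icc (0 : ℤ) N) (hC₂sub : C₂ ⊆ Finset.Icc (0 : ℤ) N) :
    ∀ i : ℕ, nthDist δ N C₁ i ≤ 2 * k * nthDist δ N C₂ i := by
  intro i
  have hC₁ne : C₁.Nonempty := Finset.card_pos.mp (hC₁card ▸ hk)
  have hC₂ne : C₂.Nonempty := Finset.card_pos.mp (hC₂card ▸ hk)
  set L₁ : List ℝ := ((Finset.Icc (0 : ℤ) N).val.map (Dmin δ C₁)).sort (· ≤ ·) with hL₁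
  set L₂ : List ℝ := ((Finset.Icc (0 : ℤ) N).val.map (Dmin δ C₂)).sort (· ≤ ·) with hL₂
  have hL₁sorted : L₁.Pairwise (· ≤ ·) := Multiset.pairwise_sort _ _
  have hL₂sorted : L₂.Pairwise (· ≤ ·) := Multiset.pairwise_sort _ _
  have hlenIcc : Multiset.card (Finset.Icc (0 : ℤ) N).val = (N + 1).toNat := by
    show (Finset.Icc (0 : ℤ) N).card = (N + 1).toNat
    rw [Int.card_Icc]
    omega
  have hlen₁ : L₁.length = (N + 1).toNat := by
    rw [hL₁, Multiset.length_sort, Multiset.card_map, hlenIcc]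
  have hlen₂ : L₂.length = (N + 1).toNat := by
    rw [hL₂, Multiset.length_sort, Multiset.card_map, hlenIcc]
  -- counting bridge : countP on the sorted lists = card of filtered Finset
  have hcount : ∀ (C : Finset ℤ) (t : ℝ),
      (((Finset.Icc (0 : ℤ) N).val.map (Dmin δ C)).sort (· ≤ ·)).countP
        (fun x => decide (x ≤ t)) =
      ((Finset.Icc (0 : ℤ) N).filter (fun p => Dmin δ C p ≤ t)).card := by
    intro C t
    have h1 : (((Finset.Icc (0 : ℤ) N).val.map (Dmin δ C)).sort (· ≤ ·)).countP
        (fun x => decide (x ≤ t)) =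
        Multiset.countP (fun x => x ≤ t)
          ((Finset.Icc (0 : ℤ) N).val.map (Dmin δ C)) := by
      rw [← Multiset.coe_countP (fun x : ℝ => x ≤ t), Multiset.sort_eq]
    rw [h1, Multiset.countP_map]
    rw [Finset.card_def, Finset.filter_val]
  show L₁.getD i 0 ≤ 2 * k * L₂.getD i 0
  rcases Nat.lt_or_ge i L₁.length with hi | hi
  · -- in-range case
    have hi₂ : i < L₂.length := by omega
    -- the i-th value of L₂ is δ * m for a natural number m
    have hd₂mem : L₂.getD i 0 ∈ L₂ := by
      rw [List.getD_eq_getElem L₂ 0 hi₂]; exact List.getElem_mem _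
    have hd₂mem' : L₂.getD i 0 ∈ (Finset.Icc (0 : ℤ) N).val.map (Dmin δ C₂) := by
      rw [← Multiset.sort_eq (α := ℝ) ((Finset.Icc (0 : ℤ) N).val.map (Dmin δ C₂)) (· ≤ ·)]
      exact hd₂mem
    obtain ⟨p₀, hp₀, hp₀eq⟩ := Multiset.mem_map.mp hd₂mem'
    obtain ⟨s₀, hs₀, hs₀eq⟩ := dmin_eq (δ := δ) hC₂ne p₀
    set m : ℕ := (p₀ - s₀).natAbs with hm
    have habs : |(p₀ : ℝ) - s₀| = (m : ℝ) := by
      rw [hm, Nat.cast_natAbs]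
      push_cast
      rfl
    have hd₂ : L₂.getD i 0 = δ * m := by rw [← hp₀eq, hs₀eq, habs]
    -- upper bound on the count for C₂
    set S₂ : Finset ℤ := (Finset.Icc (0 : ℤ) N).filter (fun p => Dmin δ C₂ p ≤ δ * m) with hS₂
    have hi₁S₂ : i + 1 ≤ S₂.card := by
      have := le_countP_getD hL₂sorted hi₂
      rw [hd₂] at this
      rw [hS₂, ← hcount C₂ (δ * m)]
      exact this
    have hS₂sub : S₂ ⊆ C₂.biUnion (fun s => Finset.Icc (s - m) (s + m)) := by
      intro p hp
      rw [hS₂, Finset.mem_filter] at hp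
      obtain ⟨s, hs, hseq⟩ := dmin_eq (δ := δ) hC₂ne p
      have h1 : δ * |(p : ℝ) - s| ≤ δ * m := hseq ▸ hp.2
      have h2 : |(p : ℝ) - s| ≤ (m : ℝ) := le_of_mul_le_mul_left h1 hδ
      have h3 : |p - s| ≤ (m : ℤ) := by
        have h2' : |((p - s : ℤ) : ℝ)| ≤ ((m : ℤ) : ℝ) := by push_cast; exact h2
        rw [← Int.cast_abs] at h2'
        exact_mod_cast h2' 
      refine Finset.mem_biUnion.mpr ⟨s, hs, Finset.mem_Icc.mpr ?_⟩
      rw [abs_le] at h3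
      omega
    have hS₂card : (S₂.card : ℤ) ≤ k * (2 * m + 1) := by
      have h1 : S₂.card ≤ ∑ s ∈ C₂, (Finset.Icc (s - (m : ℤ)) (s + m)).card :=
        le_trans (Finset.card_le_card hS₂sub) (Finset.card_biUnion_le)
      have h2 : ∀ s ∈ C₂, (Finset.Icc (s - (m : ℤ)) (s + m)).card = 2 * m + 1 := by
        intro s _
        rw [Int.card_Icc]
        omega
      rw [Finset.sum_congr rfl h2, Finset.sum_const, hC₂card, smul_eq_mul] at h1
      exact_mod_cast h1
    -- Goal: show there are at least i+1 points within 2kδm of C₁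
    have hgoal : i + 1 ≤ ((Finset.Icc (0 : ℤ) N).filter
        (fun p => Dmin δ C₁ p ≤ 2 * k * (δ * m))).card := by
      rcases Nat.eq_zero_or_pos m with hm0 | hm1
      · -- m = 0 : C₁ itself is contained in the filtered set
        have hsub : C₁ ⊆ (Finset.Icc (0 : ℤ) N).filter
            (fun p => Dmin δ C₁ p ≤ 2 * k * (δ * m)) := by
          intro p hp
          refine Finset.mem_filter.mpr ⟨hC₁sub hp, ?_⟩
          have h1 : Dmin δ C₁ p ≤ δ * |(p : ℝ) - p| := dmin_le (le_of_lt hδ) hp p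
          simp only [sub_self, abs_zero, mul_zero] at h1
          have : (m : ℝ) = 0 := by rw [hm0]; norm_num
          rw [this]
          nlinarith
        have := Finset.card_le_card hsub
        rw [hC₁card] at this
        have hk' : i + 1 ≤ k := by
          have : (S₂.card : ℤ) ≤ k := by rw [hm0] at hS₂card; push_cast at hS₂card; linarith
          omega
        omega
      · -- m ≥ 1 : interval covering argument around min and max of C₁
        set a : ℤ := C₁.min' hC₁ne with ha
        set b : ℤ := C₁.max' hC₁ne with hb
        have haC : a ∈ C₁ := C₁.min'_mem hC₁ne
        have hbC : b ∈ C₁ := C₁.max'_mem hC₁ne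
        have ha0 : 0 ≤ a := (Finset.mem_Icc.mp (hC₁sub haC)).1
        have hbN : b ≤ N := (Finset.mem_Icc.mp (hC₁sub hbC)).2
        have hab : a ≤ b := C₁.min'_le _ hbC
        have hba : (k : ℤ) ≤ b - a + 1 := by
          have hsub : C₁ ⊆ Finset.Icc a b := fun x hx =>
            Finset.mem_Icc.mpr ⟨C₁.min'_le x hx, C₁.le_max' x hx⟩
          have := Finset.card_le_card hsub
          rw [hC₁card, Int.card_Icc] at this
          omega
        set R : ℤ := 2 * (k * m) with hR
        set Ia : Finset ℤ := Finset.Icc (max 0 (a - R)) (min N (a + R)) with hIa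
        set Ib : Finset ℤ := Finset.Icc (max 0 (b - R)) (min N (b + R)) with hIb
        have hcov : ∀ (s : ℤ), s ∈ C₁ →
            ∀ p ∈ Finset.Icc (max 0 (s - R)) (min N (s + R)),
            p ∈ (Finset.Icc (0 : ℤ) N).filter (fun p => Dmin δ C₁ p ≤ 2 * k * (δ * m)) := by
          intro s hs p hp
          rw [Finset.mem_Icc] at hp
          refine Finset.mem_filter.mpr ⟨Finset.mem_Icc.mpr ⟨le_trans (le_max_left _ _) hp.1,
            le_trans hp.2 (min_le_left _ _)⟩, ?_⟩
          have h1 : |p - s| ≤ R := by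
            have h2a := le_trans (le_max_right 0 (s - R)) hp.1
            have h2b := le_trans hp.2 (min_le_right N (s + R))
            rw [abs_le]
            omega
          have h2 : |(p : ℝ) - s| ≤ (R : ℝ) := by
            have h2' : |((p - s : ℤ) : ℝ)| ≤ ((R : ℤ) : ℝ) := by
              rw [← Int.cast_abs]; exact_mod_cast h1
            push_cast at h2'
            exact h2' 
          calc Dmin δ C₁ p ≤ δ * |(p : ℝ) - s| := dmin_le (le_of_lt hδ) hs p
            _ ≤ δ * R := mul_le_mul_of_nonneg_left h2 (le_of_lt hδ)
            _ = 2 * k * (δ * m) := by rw [hR]; push_cast; ring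
        have hUsub : Ia ∪ Ib ⊆ (Finset.Icc (0 : ℤ) N).filter
            (fun p => Dmin δ C₁ p ≤ 2 * k * (δ * m)) := by
          intro p hp
          rcases Finset.mem_union.mp hp with hp | hp
          · exact hcov a haC p hp
          · exact hcov b hbC p hp
        have hUcard : (Ia ∪ Ib).card + (Ia ∩ Ib).card = Ia.card + Ib.card :=
          Finset.card_union_add_card_inter _ _
        have hInter : Ia ∩ Ib = Finset.Icc (max (max 0 (a - R)) (max 0 (b - R)))
            (min (min N (a + R)) (min N (b + R))) := Icc_inter_Icc_int _ _ _ _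
        have hIacard : Ia.card = (min N (a + R) + 1 - max 0 (a - R)).toNat := Int.card_Icc _ _
        have hIbcard : Ib.card = (min N (b + R) + 1 - max 0 (b - R)).toNat := Int.card_Icc _ _
        have hIcard : (Ia ∩ Ib).card = ((min (min N (a + R)) (min N (b + R))) + 1 -
            (max (max 0 (a - R)) (max 0 (b - R)))).toNat := by
          rw [hInter, Int.card_Icc]
        -- combine all arithmetic facts
        have hMk : (k : ℤ) ≤ (k : ℤ) * m := by
          have : (1 : ℤ) ≤ m := by exact_mod_cast hm1
          nlinarith [Int.ofNat_le.mpr (le_of_lt hk)]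
        have hkpos : (1 : ℤ) ≤ k := by exact_mod_cast hk
        have hiN : i + 1 ≤ (N + 1).toNat := by omega
        have hS₂card' : (S₂.card : ℤ) ≤ 2 * ((k : ℤ) * m) + k := by
          have : (k : ℤ) * (2 * m + 1) = 2 * ((k : ℤ) * m) + k := by ring
          omega
        have hmain : i + 1 ≤ (Ia ∪ Ib).card := by
          omega
        exact le_trans hmain (Finset.card_le_card hUsub)
    -- conclude via the sorted-list lemma
    have := hcount C₁ (2 * k * (δ * m))
    rw [← hL₁] at this
    have hle : L₁.getD i 0 ≤ 2 * k * (δ * m) :=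
      sorted_getD_le_of_countP hL₁sorted hi (by rw [this]; exact hgoal)
    rw [hd₂]
    exact hle
  · -- out-of-range case: both sides are 0
    have hi₂ : L₂.length ≤ i := by omega
    rw [List.getD_eq_default L₁ 0 hi, List.getD_eq_default L₂ 0 hi₂]
    simp
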